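/- If X₁, X₂, …, X_d are i.i.d. Gaussian random variables with distribution N(0, σ²) where σ > 0, then the ratio E[max_{1 ≤ i ≤ d} X_i] / (σ·√(2·ln d)) tends to 1 as d → ∞. -/

import Mathlib

open MeasureTheory ProbabilityTheory Real Filter Set

instance gaussProbInst (σ : ℝ) : IsProbabilityMeasure (gaussianReal 0 ⟨σ ^ 2, sq_nonneg σ⟩) :=
  instIsProbabilityMeasureGaussianReal _ _

section gaussAux
variable {σ : ℝ}

lemma gvar_ne_zero (hσ : 0 < σ) : (⟨σ ^ 2, sq_nonneg σ⟩ : NNReal) ≠ 0 :=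
  fun h => (pow_pos hσ 2).ne' (congrArg (fun x : NNReal => (x : ℝ)) h)

lemma gauss_eq_wd (hσ : 0 < σ) :
    gaussianReal 0 ⟨σ ^ 2, sq_nonneg σ⟩ =
      volume.withDensity
        (fun x => ((gaussianPDFReal 0 ⟨σ ^ 2, sq_nonneg σ⟩ x).toNNReal : ENNReal)) := by
  rw [gaussianReal_of_var_ne_zero 0 (gvar_ne_zero hσ)]
  rfl

lemma gauss_integral_eq (hσ : 0 < σ) (g : ℝ → ℝ) :
    ∫ x, g x ∂(gaussianReal 0 ⟨σ ^ 2, sq_nonneg σ⟩) =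
      ∫ x, gaussianPDFReal 0 ⟨σ ^ 2, sq_nonneg σ⟩ x * g x := by
  rw [gauss_eq_wd hσ, integral_withDensity_eq_integral_smul
    ((measurable_gaussianPDFReal 0 ⟨σ ^ 2, sq_nonneg σ⟩).real_toNNReal) g]
  congr 1
  ext x
  simp only [NNReal.smul_def, smul_eq_mul, Real.coe_toNNReal _ (gaussianPDFReal_nonneg 0 ⟨σ ^ 2, sq_nonneg σ⟩ x)]

lemma gauss_integrable_iff (hσ : 0 < σ) {g : ℝ → ℝ} :
    Integrable g (gaussianReal 0 ⟨σ ^ 2, sq_nonneg σ⟩) ↔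
      Integrable (fun x => gaussianPDFReal 0 ⟨σ ^ 2, sq_nonneg σ⟩ x * g x) := by
  rw [gauss_eq_wd hσ, integrable_withDensity_iff_integrable_smul
    ((measurable_gaussianPDFReal 0 ⟨σ ^ 2, sq_nonneg σ⟩).real_toNNReal)]
  constructor <;> intro h <;> refine h.congr (Filter.Eventually.of_forall fun x => ?_) <;>
    simp only [NNReal.smul_def, smul_eq_mul,
      Real.coe_toNNReal _ (gaussianPDFReal_nonneg 0 ⟨σ ^ 2, sq_nonneg σ⟩ x)]

lemma gauss_pdf_eq' (hσ : 0 < σ) (x : ℝ) :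
    gaussianPDFReal 0 ⟨σ ^ 2, sq_nonneg σ⟩ x =
      (Real.sqrt (2 * π * σ ^ 2))⁻¹ * Real.exp (-(2 * σ ^ 2)⁻¹ * x ^ 2) := by
  simp only [gaussianPDFReal, NNReal.coe_mk, sub_zero]
  congr 1
  change rexp (-x ^ 2 / (2 * σ ^ 2)) = _
  congr 1
  ring

lemma gauss_integrable_abs (hσ : 0 < σ) :
    Integrable (fun x => |x|) (gaussianReal 0 ⟨σ ^ 2, sq_nonneg σ⟩) := by
  rw [gauss_integrable_iff hσ]
  have h : Integrable (fun x : ℝ => (Real.sqrt (2 * π * σ ^ 2))⁻¹ *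
      |x * Real.exp (-(2 * σ ^ 2)⁻¹ * x ^ 2)|) :=
    ((integrable_mul_exp_neg_mul_sq (b := (2 * σ ^ 2)⁻¹) (by positivity)).abs).const_mul _
  refine h.congr (Filter.Eventually.of_forall fun x => ?_)
  simp only [gauss_pdf_eq' hσ, abs_mul, abs_of_nonneg (Real.exp_nonneg _)]
  ring

lemma gauss_integrable_id (hσ : 0 < σ) :
    Integrable (fun x : ℝ => x) (gaussianReal 0 ⟨σ ^ 2, sq_nonneg σ⟩) :=
  (gauss_integrable_abs hσ).mono' measurable_id.aestronglyMeasurable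
    (Filter.Eventually.of_forall fun x => by simp)

lemma integral_Ioi_x_exp (hσ : 0 < σ) (a : ℝ) :
    ∫ x in Ioi a, x * Real.exp (-(2 * σ ^ 2)⁻¹ * x ^ 2) =
      σ ^ 2 * Real.exp (-(2 * σ ^ 2)⁻¹ * a ^ 2) := by
  have hb : (0:ℝ) < (2 * σ ^ 2)⁻¹ := by positivity
  have hderiv : ∀ x ∈ Ici a, HasDerivAt (fun x : ℝ => -σ ^ 2 * Real.exp (-(2 * σ ^ 2)⁻¹ * x ^ 2))
      (x * Real.exp (-(2 * σ ^ 2)⁻¹ * x ^ 2)) x := by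
    intro x _
    have h1 := (hasDerivAt_pow 2 x).const_mul (-(2 * σ ^ 2)⁻¹)
    have h2 := (h1.exp).const_mul (-σ ^ 2)
    refine h2.congr_deriv ?_
    push_cast
    field_simp
  have hint : IntegrableOn (fun x : ℝ => x * Real.exp (-(2 * σ ^ 2)⁻¹ * x ^ 2)) (Ici a) :=
    (integrable_mul_exp_neg_mul_sq hb).integrableOn
  have htend : Tendsto (fun x : ℝ => -σ ^ 2 * Real.exp (-(2 * σ ^ 2)⁻¹ * x ^ 2)) atTop (nhds 0) := by
    have h3 : Tendsto (fun x : ℝ => -(2 * σ ^ 2)⁻¹ * x ^ 2) atTop atBot := by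
      apply Tendsto.const_mul_atTop_of_neg (by simpa using hb)
      exact tendsto_pow_atTop (by norm_num)
    have := (Real.tendsto_exp_atBot.comp h3).const_mul (-σ ^ 2)
    simpa using this
  have := MeasureTheory.integral_Ioi_of_hasDerivAt_of_tendsto
    ((hderiv a (self_mem_Ici)).continuousAt.continuousWithinAt)
    (fun x hx => hderiv x (mem_Ici.mpr (le_of_lt hx))) (hint.mono_set Ioi_subset_Ici_self) htend
  rw [this]
  ring

lemma sqrt_two_pi_sq (hσ : 0 < σ) : Real.sqrt (2 * π * σ ^ 2) = Real.sqrt (2 * π) * σ := by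
  rw [Real.sqrt_mul (by positivity), Real.sqrt_sq hσ.le]

lemma gauss_integrable_pdf_mul_id (hσ : 0 < σ) :
    Integrable (fun x => gaussianPDFReal 0 ⟨σ ^ 2, sq_nonneg σ⟩ x * x) := by
  have h := ((integrable_mul_exp_neg_mul_sq (b := (2 * σ ^ 2)⁻¹)
    (by positivity)).const_mul (Real.sqrt (2 * π * σ ^ 2))⁻¹)
  refine h.congr (Filter.Eventually.of_forall fun x => ?_)
  simp only [gauss_pdf_eq' hσ]
  ring

lemma gauss_pos_part_le (hσ : 0 < σ) {a : ℝ} (ha : 0 ≤ a) :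
    ∫ x, max (x - a) 0 ∂(gaussianReal 0 ⟨σ ^ 2, sq_nonneg σ⟩) ≤
      σ / Real.sqrt (2 * π) * Real.exp (-(2 * σ ^ 2)⁻¹ * a ^ 2) := by
  rw [gauss_integral_eq hσ]
  have hind : Integrable ((Ioi a).indicator
      (fun x => gaussianPDFReal 0 ⟨σ ^ 2, sq_nonneg σ⟩ x * x)) :=
    (gauss_integrable_pdf_mul_id hσ).indicator measurableSet_Ioi
  have hle : ∀ x, gaussianPDFReal 0 ⟨σ ^ 2, sq_nonneg σ⟩ x * max (x - a) 0 ≤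
      (Ioi a).indicator (fun x => gaussianPDFReal 0 ⟨σ ^ 2, sq_nonneg σ⟩ x * x) x := by
    intro x
    by_cases hx : x ∈ Ioi a
    · rw [indicator_of_mem hx]
      refine mul_le_mul_of_nonneg_left ?_ (gaussianPDFReal_nonneg 0 _ x)
      have : a < x := hx
      exact max_le (by linarith) (by linarith)
    · rw [indicator_of_notMem hx]
      have : x ≤ a := not_lt.mp hx
      rw [max_eq_right (by linarith), mul_zero]
  calc ∫ x, gaussianPDFReal 0 ⟨σ ^ 2, sq_nonneg σ⟩ x * max (x - a) 0
      ≤ ∫ x, (Ioi a).indicator (fun x => gaussianPDFReal 0 ⟨σ ^ 2, sq_nonneg σ⟩ x * x) x :=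
        integral_mono_of_nonneg
          (Filter.Eventually.of_forall fun x =>
            mul_nonneg (gaussianPDFReal_nonneg 0 _ x) (le_max_right _ _))
          hind (Filter.Eventually.of_forall hle)
    _ = ∫ x in Ioi a, gaussianPDFReal 0 ⟨σ ^ 2, sq_nonneg σ⟩ x * x :=
        integral_indicator measurableSet_Ioi
    _ = (Real.sqrt (2 * π * σ ^ 2))⁻¹ * ∫ x in Ioi a, x * Real.exp (-(2 * σ ^ 2)⁻¹ * x ^ 2) := by
        rw [← MeasureTheory.integral_const_mul]
        exact integral_congr_ae (Filter.Eventually.of_forall fun x => by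
          simp only [gauss_pdf_eq' hσ]; ring)
    _ = σ / Real.sqrt (2 * π) * Real.exp (-(2 * σ ^ 2)⁻¹ * a ^ 2) := by
        rw [integral_Ioi_x_exp hσ, sqrt_two_pi_sq hσ]
        have h2 : Real.sqrt (2 * π) ≠ 0 := by positivity
        field_simp

lemma gauss_tail_lb (hσ : 0 < σ) {a : ℝ} (ha : 0 ≤ a) :
    ENNReal.ofReal (gaussianPDFReal 0 ⟨σ ^ 2, sq_nonneg σ⟩ (a + 1)) ≤
      gaussianReal 0 ⟨σ ^ 2, sq_nonneg σ⟩ (Ici a) := by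
  rw [gaussianReal_apply_eq_integral 0 (gvar_ne_zero hσ) (Ici a)]
  apply ENNReal.ofReal_le_ofReal
  have hpdf_int : IntegrableOn (gaussianPDFReal 0 ⟨σ ^ 2, sq_nonneg σ⟩) (Ici a) :=
    (integrable_gaussianPDFReal 0 _).integrableOn
  calc gaussianPDFReal 0 ⟨σ ^ 2, sq_nonneg σ⟩ (a + 1)
      = ∫ _x in Ioc a (a + 1), gaussianPDFReal 0 ⟨σ ^ 2, sq_nonneg σ⟩ (a + 1) := by
        rw [setIntegral_const]
        simp [Real.volume_Ioc]
    _ ≤ ∫ x in Ioc a (a + 1), gaussianPDFReal 0 ⟨σ ^ 2, sq_nonneg σ⟩ x := by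
        refine setIntegral_mono_on (integrableOn_const ?_)
          ((integrable_gaussianPDFReal 0 _).integrableOn) measurableSet_Ioc (fun x hx => ?_)
        · rw [Real.volume_Ioc]; exact ENNReal.ofReal_ne_top
        · rw [gauss_pdf_eq' hσ, gauss_pdf_eq' hσ]
          have h1 : x ^ 2 ≤ (a + 1) ^ 2 := by
            have := hx.1; have := hx.2; nlinarith
          refine mul_le_mul_of_nonneg_left ?_ (inv_nonneg.2 (Real.sqrt_nonneg _))
          apply Real.exp_le_exp.mpr
          have hb : (0:ℝ) < (2 * σ ^ 2)⁻¹ := by positivity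
          nlinarith
    _ ≤ ∫ x in Ici a, gaussianPDFReal 0 ⟨σ ^ 2, sq_nonneg σ⟩ x :=
        setIntegral_mono_set hpdf_int
          (Filter.Eventually.of_forall fun x => gaussianPDFReal_nonneg _ _ _)
          (HasSubset.Subset.eventuallyLE (fun x hx => le_of_lt hx.1))

end gaussAux

section maxAux
variable {Ω : Type*} [MeasurableSpace Ω] {μ : Measure Ω} [IsProbabilityMeasure μ]
  {X : ℕ → Ω → ℝ}

lemma max_measurable (hX : ∀ i, Measurable (X i)) (d : ℕ) (hd : 1 ≤ d) :
    Measurable (fun ω => ⨆ i : Fin d, X i ω) := by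
  haveI : Nonempty (Fin d) := Fin.pos_iff_nonempty.mp hd
  have h : (fun ω => ⨆ i : Fin d, X i ω) =
      Finset.univ.sup' Finset.univ_nonempty (fun i : Fin d => X (i : ℕ)) := by
    funext ω
    rw [← Finset.sup'_univ_eq_ciSup, Finset.sup'_apply]
  rw [h]
  exact Finset.measurable_sup' _ (fun i _ => hX (i : ℕ))

lemma max_le_sum_abs (d : ℕ) (hd : 1 ≤ d) (ω : Ω) :
    |⨆ i : Fin d, X i ω| ≤ ∑ i : Fin d, |X i ω| := by
  haveI : Nonempty (Fin d) := Fin.pos_iff_nonempty.mp hd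
  set i0 : Fin d := ⟨0, hd⟩
  rw [abs_le]
  constructor
  · have h1 : X (i0 : ℕ) ω ≤ ⨆ i : Fin d, X i ω :=
      le_ciSup (f := fun i : Fin d => X (i : ℕ) ω) (Set.finite_range _).bddAbove i0
    have h2 : |X (i0 : ℕ) ω| ≤ ∑ i : Fin d, |X (i : ℕ) ω| :=
      Finset.single_le_sum (f := fun i : Fin d => |X (i : ℕ) ω|)
        (fun i _ => abs_nonneg _) (Finset.mem_univ i0)
    have h3 := neg_abs_le (X (i0 : ℕ) ω)
    linarith
  · refine ciSup_le fun i => ?_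
    exact le_trans (le_abs_self _) (Finset.single_le_sum (f := fun i : Fin d => |X (i : ℕ) ω|)
      (fun i _ => abs_nonneg _) (Finset.mem_univ i))

end maxAux
section transferAux
variable {Ω : Type*} [MeasurableSpace Ω] {μ : Measure Ω} [IsProbabilityMeasure μ]
  {X : ℕ → Ω → ℝ} {σ : ℝ}

lemma comp_integrable (hX : ∀ i, Measurable (X i))
    (hlaw : ∀ i, μ.map (X i) = gaussianReal 0 ⟨σ ^ 2, sq_nonneg σ⟩) (i : ℕ) {g : ℝ → ℝ}
    (hg : Measurable g) (hgi : Integrable g (gaussianReal 0 ⟨σ ^ 2, sq_nonneg σ⟩)) :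
    Integrable (fun ω => g (X i ω)) μ := by
  rw [← hlaw i] at hgi
  exact (integrable_map_measure hg.aestronglyMeasurable (hX i).aemeasurable).mp hgi

lemma comp_integral (hX : ∀ i, Measurable (X i))
    (hlaw : ∀ i, μ.map (X i) = gaussianReal 0 ⟨σ ^ 2, sq_nonneg σ⟩) (i : ℕ) {g : ℝ → ℝ}
    (hg : Measurable g) :
    ∫ ω, g (X i ω) ∂μ = ∫ x, g x ∂(gaussianReal 0 ⟨σ ^ 2, sq_nonneg σ⟩) := by
  rw [← hlaw i, integral_map (hX i).aemeasurable hg.aestronglyMeasurable]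

lemma max_integrable (hσ : 0 < σ) (hX : ∀ i, Measurable (X i))
    (hlaw : ∀ i, μ.map (X i) = gaussianReal 0 ⟨σ ^ 2, sq_nonneg σ⟩) (d : ℕ) (hd : 1 ≤ d) :
    Integrable (fun ω => ⨆ i : Fin d, X i ω) μ := by
  have habs : ∀ i : ℕ, Integrable (fun ω => |X i ω|) μ :=
    fun i => comp_integrable hX hlaw i measurable_abs (gauss_integrable_abs hσ)
  refine Integrable.mono' (integrable_finset_sum Finset.univ
    (fun (i : Fin d) _ => habs (i : ℕ)))
    ((max_measurable hX d hd).aestronglyMeasurable)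
    (Filter.Eventually.of_forall fun ω => ?_)
  simpa [Real.norm_eq_abs] using max_le_sum_abs d hd ω

lemma upper_bound (hσ : 0 < σ) (hX : ∀ i, Measurable (X i))
    (hlaw : ∀ i, μ.map (X i) = gaussianReal 0 ⟨σ ^ 2, sq_nonneg σ⟩) (d : ℕ) (hd : 1 ≤ d) :
    ∫ ω, ⨆ i : Fin d, X i ω ∂μ ≤
      σ * Real.sqrt (2 * Real.log d) + σ / Real.sqrt (2 * π) := by
  haveI : Nonempty (Fin d) := Fin.pos_iff_nonempty.mp hd
  set a := σ * Real.sqrt (2 * Real.log d) with ha_def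
  have hlog : 0 ≤ Real.log d := Real.log_nonneg (by exact_mod_cast hd)
  have ha : 0 ≤ a := by positivity
  have hgmeas : Measurable (fun x : ℝ => max (x - a) 0) :=
    (measurable_id.sub measurable_const).max measurable_const
  have hgi : Integrable (fun x : ℝ => max (x - a) 0) (gaussianReal 0 ⟨σ ^ 2, sq_nonneg σ⟩) :=
    ((gauss_integrable_id hσ).sub (integrable_const a)).pos_part
  have hXi : ∀ i : ℕ, Integrable (fun ω => max (X i ω - a) 0) μ :=
    fun i => comp_integrable hX hlaw i hgmeas hgi
  have hpt : ∀ ω, ⨆ i : Fin d, X i ω ≤ a + ∑ i : Fin d, max (X (i : ℕ) ω - a) 0 := by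
    intro ω
    refine ciSup_le fun i => ?_
    have h1 : X (i : ℕ) ω ≤ a + max (X (i : ℕ) ω - a) 0 := by
      have := le_max_left (X (i : ℕ) ω - a) 0
      linarith
    have h2 : max (X (i : ℕ) ω - a) 0 ≤ ∑ j : Fin d, max (X (j : ℕ) ω - a) 0 :=
      Finset.single_le_sum (f := fun j : Fin d => max (X (j : ℕ) ω - a) 0)
        (fun j _ => le_max_right _ _) (Finset.mem_univ i)
    linarith
  have hrhs : Integrable (fun ω => a + ∑ i : Fin d, max (X (i : ℕ) ω - a) 0) μ :=
    (integrable_const a).add (integrable_finset_sum _ (fun i _ => hXi (i : ℕ)))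
  have hmono := integral_mono (max_integrable hσ hX hlaw d hd) hrhs hpt
  have heq : ∫ ω, (a + ∑ i : Fin d, max (X (i : ℕ) ω - a) 0) ∂μ =
      a + (d : ℝ) * ∫ x, max (x - a) 0 ∂(gaussianReal 0 ⟨σ ^ 2, sq_nonneg σ⟩) := by
    rw [integral_add (integrable_const a)
        (integrable_finset_sum (ι := Fin d) Finset.univ (fun i _ => hXi (i : ℕ))),
      integral_const, integral_finset_sum (ι := Fin d) Finset.univ (fun i _ => hXi (i : ℕ))]
    simp only [probReal_univ, one_smul]
    congr 1
    have : ∀ i : Fin d, ∫ ω, max (X (i : ℕ) ω - a) 0 ∂μ =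
        ∫ x, max (x - a) 0 ∂(gaussianReal 0 ⟨σ ^ 2, sq_nonneg σ⟩) :=
      fun i => comp_integral hX hlaw (i : ℕ) hgmeas
    rw [Finset.sum_congr rfl (fun i _ => this i)]
    simp [mul_comm]
  rw [heq] at hmono
  refine le_trans hmono ?_
  have hd0 : (0:ℝ) < d := by exact_mod_cast hd
  have hexp : Real.exp (-(2 * σ ^ 2)⁻¹ * a ^ 2) = (d : ℝ)⁻¹ := by
    have haa : a ^ 2 = σ ^ 2 * (2 * Real.log d) := by
      rw [ha_def, mul_pow, Real.sq_sqrt (by linarith)]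
    rw [haa]
    have : -(2 * σ ^ 2)⁻¹ * (σ ^ 2 * (2 * Real.log d)) = -Real.log d := by
      field_simp
    rw [this, Real.exp_neg, Real.exp_log hd0]
  have := gauss_pos_part_le hσ ha
  calc a + (d : ℝ) * ∫ x, max (x - a) 0 ∂(gaussianReal 0 ⟨σ ^ 2, sq_nonneg σ⟩)
      ≤ a + (d : ℝ) * (σ / Real.sqrt (2 * π) * Real.exp (-(2 * σ ^ 2)⁻¹ * a ^ 2)) := by
        have hdnn : (0:ℝ) ≤ d := hd0.le
        nlinarith [gauss_pos_part_le hσ ha]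
    _ = a + σ / Real.sqrt (2 * π) := by
        rw [hexp]
        field_simp

end transferAux
section lowerAux
variable {Ω : Type*} [MeasurableSpace Ω] {μ : Measure Ω} [IsProbabilityMeasure μ]
  {X : ℕ → Ω → ℝ} {σ : ℝ}

lemma lower_bound (hσ : 0 < σ) (hX : ∀ i, Measurable (X i))
    (hlaw : ∀ i, μ.map (X i) = gaussianReal 0 ⟨σ ^ 2, sq_nonneg σ⟩)
    (hindep : iIndepFun X μ)
    {a : ℝ} (ha : 0 ≤ a) (d : ℕ) (hd : 1 ≤ d) :
    a * (1 - (1 - ((gaussianReal 0 ⟨σ ^ 2, sq_nonneg σ⟩) (Ici a)).toReal) ^ d)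
      - ∫ x, |x| ∂(gaussianReal 0 ⟨σ ^ 2, sq_nonneg σ⟩)
      ≤ ∫ ω, ⨆ i : Fin d, X i ω ∂μ := by
  haveI : Nonempty (Fin d) := Fin.pos_iff_nonempty.mp hd
  set ν := gaussianReal 0 ⟨σ ^ 2, sq_nonneg σ⟩ with hν
  set p := (ν (Ici a)).toReal with hp
  set s := {ω | a ≤ ⨆ i : Fin d, X i ω} with hs_def
  have hs : MeasurableSet s := measurableSet_le measurable_const (max_measurable hX d hd)
  have habs0 : Integrable (fun ω => |X 0 ω|) μ :=
    comp_integrable hX hlaw 0 measurable_abs (gauss_integrable_abs hσ)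
  -- pointwise bound
  have hpt : ∀ ω, s.indicator (fun _ => a) ω - |X 0 ω| ≤ ⨆ i : Fin d, X i ω := by
    intro ω
    by_cases hω : ω ∈ s
    · rw [indicator_of_mem hω]
      have : a ≤ ⨆ i : Fin d, X i ω := hω
      have := abs_nonneg (X 0 ω)
      linarith
    · rw [indicator_of_notMem hω]
      have h1 : X ((⟨0, hd⟩ : Fin d) : ℕ) ω ≤ ⨆ i : Fin d, X i ω :=
        le_ciSup (f := fun i : Fin d => X (i : ℕ) ω) (Set.finite_range _).bddAbove ⟨0, hd⟩
      have h2 := neg_abs_le (X 0 ω)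
      simp only [Fin.val_mk] at h1
      linarith
  have hlhs_int : Integrable (fun ω => s.indicator (fun _ => a) ω - |X 0 ω|) μ :=
    ((integrable_const a).indicator hs).sub habs0
  have hmono := integral_mono hlhs_int (max_integrable hσ hX hlaw d hd) hpt
  have heq : ∫ ω, (s.indicator (fun _ => a) ω - |X 0 ω|) ∂μ =
      a * (μ s).toReal - ∫ x, |x| ∂ν := by
    rw [integral_sub ((integrable_const a).indicator hs) habs0,
      integral_indicator hs, setIntegral_const,
      comp_integral hX hlaw 0 measurable_abs]
    rw [smul_eq_mul, measureReal_def]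
    ring
  rw [heq] at hmono
  -- measure bound
  have hsub : sᶜ ⊆ ⋂ i ∈ Finset.range d, X i ⁻¹' (Iio a) := by
    intro ω hω
    simp only [mem_iInter, Finset.mem_range]
    intro i hi
    have h1 : X ((⟨i, hi⟩ : Fin d) : ℕ) ω ≤ ⨆ j : Fin d, X j ω :=
      le_ciSup (f := fun j : Fin d => X (j : ℕ) ω) (Set.finite_range _).bddAbove ⟨i, hi⟩
    have h2 : ¬ a ≤ ⨆ j : Fin d, X j ω := hω
    simp only [Fin.val_mk] at h1
    exact lt_of_le_of_lt h1 (not_le.mp h2)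
  have hprod : μ (⋂ i ∈ Finset.range d, X i ⁻¹' (Iio a)) = (ν (Iio a)) ^ d := by
    rw [hindep.meas_biInter (fun i _ => ⟨Iio a, measurableSet_Iio, rfl⟩)]
    have : ∀ i ∈ Finset.range d, μ (X i ⁻¹' (Iio a)) = ν (Iio a) := by
      intro i _
      rw [← Measure.map_apply (hX i) measurableSet_Iio, hlaw i]
    rw [Finset.prod_congr rfl this, Finset.prod_const, Finset.card_range]
  have hcompl_le : (μ sᶜ).toReal ≤ (1 - p) ^ d := by
    have h1 : μ sᶜ ≤ ν (Iio a) ^ d := le_trans (measure_mono hsub) (le_of_eq hprod)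
    have h2 : (ν (Iio a)).toReal = 1 - p := by
      have : ν (Iio a) = 1 - ν (Ici a) := by
        rw [← compl_Ici]
        exact prob_compl_eq_one_sub measurableSet_Ici
      rw [this, ENNReal.toReal_sub_of_le prob_le_one ENNReal.one_ne_top, ENNReal.toReal_one]
    calc (μ sᶜ).toReal ≤ (ν (Iio a) ^ d).toReal :=
          ENNReal.toReal_mono (ENNReal.pow_ne_top (measure_ne_top ν _)) h1
      _ = (1 - p) ^ d := by rw [ENNReal.toReal_pow, h2]
  have hμs : 1 - (1 - p) ^ d ≤ (μ s).toReal := by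
    have h3 : μ sᶜ = 1 - μ s := prob_compl_eq_one_sub hs
    have h4 : (μ sᶜ).toReal = 1 - (μ s).toReal := by
      rw [h3, ENNReal.toReal_sub_of_le prob_le_one ENNReal.one_ne_top, ENNReal.toReal_one]
    linarith [hcompl_le, h4.symm.le, h4.le]
  refine le_trans ?_ hmono
  have := mul_le_mul_of_nonneg_left hμs ha
  linarith
end lowerAux
section limitAux

lemma tendsto_sqrt_atTop' : Tendsto Real.sqrt atTop atTop := by
  rw [Filter.tendsto_atTop_atTop]
  intro b
  refine ⟨b ^ 2, fun a hab => ?_⟩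
  calc b ≤ |b| := le_abs_self b
    _ = Real.sqrt (b ^ 2) := (Real.sqrt_sq_eq_abs b).symm
    _ ≤ Real.sqrt a := Real.sqrt_le_sqrt hab

lemma tendsto_log_nat : Tendsto (fun d : ℕ => Real.log d) atTop atTop :=
  Real.tendsto_log_atTop.comp tendsto_natCast_atTop_atTop

lemma lin_sub_sqrt_atTop {b C : ℝ} (hb : 0 < b) (hC : 0 ≤ C) :
    Tendsto (fun x : ℝ => b * x - C * Real.sqrt (2 * x)) atTop atTop := by
  have hhalf : Tendsto (fun x : ℝ => b / 2 * x) atTop atTop :=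
    Tendsto.const_mul_atTop (by linarith) tendsto_id
  refine tendsto_atTop_mono' atTop ?_ hhalf
  filter_upwards [Filter.eventually_ge_atTop (0:ℝ),
    Filter.eventually_ge_atTop (8 * C ^ 2 / b ^ 2)] with x hx0 hx1
  have key : C * Real.sqrt (2 * x) ≤ b / 2 * x := by
    have h1 : C * Real.sqrt (2 * x) = Real.sqrt (C ^ 2 * (2 * x)) := by
      rw [Real.sqrt_mul (sq_nonneg C), Real.sqrt_sq hC]
    have h2 : b / 2 * x = Real.sqrt ((b / 2 * x) ^ 2) :=
      (Real.sqrt_sq (by positivity)).symm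
    rw [h1, h2]
    apply Real.sqrt_le_sqrt
    have hb2 : 0 < b ^ 2 := by positivity
    rw [div_le_iff₀ hb2] at hx1
    nlinarith
  linarith

end limitAux
section powAux

lemma gauss_pow_tendsto_zero {σ c : ℝ} (hσ : 0 < σ) (hc0 : 0 < c) (hc1 : c < 1) :
    Tendsto (fun d : ℕ => (1 - ((gaussianReal 0 ⟨σ ^ 2, sq_nonneg σ⟩)
        (Ici (c * (σ * Real.sqrt (2 * Real.log d))))).toReal) ^ d)
      atTop (nhds 0) := by
  set ν := gaussianReal 0 ⟨σ ^ 2, sq_nonneg σ⟩ with hν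
  set a : ℕ → ℝ := fun d => c * (σ * Real.sqrt (2 * Real.log d)) with ha_def
  set p : ℕ → ℝ := fun d => (ν (Ici (a d))).toReal with hp_def
  set K : ℝ := (Real.sqrt (2 * π * σ ^ 2))⁻¹ with hK
  have hK0 : 0 < K := by
    rw [hK]
    have : (0:ℝ) < 2 * π * σ ^ 2 := by positivity
    positivity
  have hp0 : ∀ d, 0 ≤ p d := fun d => ENNReal.toReal_nonneg
  have hp1 : ∀ d, p d ≤ 1 := fun d => by
    simpa using ENNReal.toReal_mono ENNReal.one_ne_top prob_le_one
  have ha0 : ∀ d : ℕ, 1 ≤ d → 0 ≤ a d := by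
    intro d hd
    have : (0:ℝ) ≤ Real.log d := Real.log_nonneg (by exact_mod_cast hd)
    rw [ha_def]
    positivity
  have hplb : ∀ d : ℕ, 1 ≤ d → K * Real.exp (-(2 * σ ^ 2)⁻¹ * (a d + 1) ^ 2) ≤ p d := by
    intro d hd
    have h1 := gauss_tail_lb hσ (ha0 d hd)
    have h2 := ENNReal.toReal_mono (measure_ne_top ν _) h1
    rw [ENNReal.toReal_ofReal (gaussianPDFReal_nonneg 0 ⟨σ ^ 2, sq_nonneg σ⟩ _)] at h2
    rw [gauss_pdf_eq' hσ] at h2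
    exact h2
  -- d * p d → ∞
  have hdp : Tendsto (fun d : ℕ => (d : ℝ) * p d) atTop atTop := by
    have hlow : Tendsto (fun d : ℕ => K * Real.exp
        ((1 - c ^ 2) * Real.log d - c / σ * Real.sqrt (2 * Real.log d) - (2 * σ ^ 2)⁻¹))
        atTop atTop := by
      apply Tendsto.const_mul_atTop hK0
      apply Real.tendsto_exp_atTop.comp
      have h3 : Tendsto (fun x : ℝ => (1 - c ^ 2) * x - c / σ * Real.sqrt (2 * x))
          atTop atTop := lin_sub_sqrt_atTop (by nlinarith) (by positivity)
      exact (tendsto_atTop_add_const_right _ (-(2 * σ ^ 2)⁻¹)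
        (h3.comp tendsto_log_nat)).congr (fun d => by
          simp only [Function.comp_apply]; ring)
    refine tendsto_atTop_mono' atTop ?_ hlow
    filter_upwards [Filter.eventually_ge_atTop 1] with d hd
    have hd0 : (0:ℝ) < d := by exact_mod_cast hd
    have hlog : 0 ≤ Real.log d := Real.log_nonneg (by exact_mod_cast hd)
    have key : (d : ℝ) * (K * Real.exp (-(2 * σ ^ 2)⁻¹ * (a d + 1) ^ 2)) =
        K * Real.exp ((1 - c ^ 2) * Real.log d - c / σ * Real.sqrt (2 * Real.log d)
          - (2 * σ ^ 2)⁻¹) := by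
      have hsq : Real.sqrt (2 * Real.log d) ^ 2 = 2 * Real.log d :=
        Real.sq_sqrt (by linarith)
      have hexp : -(2 * σ ^ 2)⁻¹ * (a d + 1) ^ 2 =
          -(c ^ 2 * Real.log d) - c / σ * Real.sqrt (2 * Real.log d) - (2 * σ ^ 2)⁻¹ := by
        have e1 : -(2 * σ ^ 2)⁻¹ * (a d + 1) ^ 2 = -(2 * σ ^ 2)⁻¹ *
            (c ^ 2 * σ ^ 2 * Real.sqrt (2 * Real.log d) ^ 2
              + 2 * (c * σ * Real.sqrt (2 * Real.log d)) + 1) := by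
          rw [ha_def]; ring
        rw [e1, hsq]
        field_simp
        ring
      rw [hexp]
      have hsplit : ∀ z : ℝ, (d : ℝ) * (K * Real.exp z) = K * Real.exp (Real.log d + z) :=
        fun z => by rw [Real.exp_add, Real.exp_log hd0]; ring
      rw [hsplit]
      congr 1
      ring
    calc K * Real.exp ((1 - c ^ 2) * Real.log d - c / σ * Real.sqrt (2 * Real.log d)
          - (2 * σ ^ 2)⁻¹)
        = (d : ℝ) * (K * Real.exp (-(2 * σ ^ 2)⁻¹ * (a d + 1) ^ 2)) := key.symm
      _ ≤ (d : ℝ) * p d := by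
          have := hplb d hd
          nlinarith
  -- squeeze
  have hub : ∀ d : ℕ, (1 - p d) ^ d ≤ Real.exp (-((d : ℝ) * p d)) := by
    intro d
    have h1 : 1 - p d ≤ Real.exp (-(p d)) := by
      have := Real.add_one_le_exp (-(p d))
      linarith
    have h2 : (1 - p d) ^ d ≤ (Real.exp (-(p d))) ^ d :=
      pow_le_pow_left₀ (by linarith [hp1 d]) h1 d
    calc (1 - p d) ^ d ≤ (Real.exp (-(p d))) ^ d := h2
      _ = Real.exp (-((d : ℝ) * p d)) := by
          rw [← Real.exp_nat_mul]
          ring_nf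
  have hexp0 : Tendsto (fun d : ℕ => Real.exp (-((d : ℝ) * p d))) atTop (nhds 0) :=
    Real.tendsto_exp_atBot.comp (tendsto_neg_atTop_atBot.comp hdp)
  show Tendsto (fun d : ℕ => (1 - p d) ^ d) atTop (nhds 0)
  exact tendsto_of_tendsto_of_tendsto_of_le_of_le tendsto_const_nhds hexp0
    (fun d => pow_nonneg (by linarith [hp1 d]) d) hub

end powAux
/-- For an i.i.d. sequence of `N(0, σ²)` Gaussian random variables with
`σ > 0`, the ratio `E[max_{1 ≤ i ≤ d} X_i] / (σ·√(2 ln d))` tends to `1` as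
`d → ∞`. -/
theorem expected_max_gaussians_ratio_tendsto_one {Ω : Type*} [MeasurableSpace Ω]
    (μ : Measure Ω) [IsProbabilityMeasure μ]
    (σ : ℝ) (hσ : 0 < σ) (X : ℕ → Ω → ℝ) (hX : ∀ i, Measurable (X i))
    (hlaw : ∀ i, μ.map (X i) = gaussianReal 0 ⟨σ ^ 2, sq_nonneg σ⟩)
    (hindep : iIndepFun X μ) :
    Tendsto (fun d : ℕ =>
        (∫ ω, ⨆ i : Fin d, X i ω ∂μ) / (σ * Real.sqrt (2 * Real.log d)))
      atTop (nhds 1) := by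
  have hB0 : 0 ≤ ∫ x, |x| ∂(gaussianReal 0 ⟨σ ^ 2, sq_nonneg σ⟩) :=
    integral_nonneg (fun x => abs_nonneg x)
  have hS : Tendsto (fun d : ℕ => σ * Real.sqrt (2 * Real.log d)) atTop atTop := by
    apply Tendsto.const_mul_atTop hσ
    exact tendsto_sqrt_atTop'.comp (Tendsto.const_mul_atTop (by norm_num) tendsto_log_nat)
  have hinv : Tendsto (fun d : ℕ => (σ * Real.sqrt (2 * Real.log d))⁻¹) atTop (nhds 0) :=
    tendsto_inv_atTop_zero.comp hS
  rw [Metric.tendsto_nhds]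
  intro ε hε
  -- upper bound side
  have htendU : Tendsto (fun d : ℕ =>
      1 + σ / Real.sqrt (2 * π) * (σ * Real.sqrt (2 * Real.log d))⁻¹) atTop (nhds 1) := by
    have := (tendsto_const_nhds : Tendsto (fun _ : ℕ => (1:ℝ)) atTop (nhds 1)).add
      (hinv.const_mul (σ / Real.sqrt (2 * π)))
    simpa using this
  have evU : ∀ᶠ d : ℕ in atTop,
      (∫ ω, ⨆ i : Fin d, X i ω ∂μ) / (σ * Real.sqrt (2 * Real.log d)) <
        1 + ε := by
    have hlt := htendU.eventually_lt_const (by linarith : (1:ℝ) < 1 + ε)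
    filter_upwards [Filter.eventually_ge_atTop 1, hS.eventually_gt_atTop 0, hlt]
      with d hd hSd hltd
    have h1 := upper_bound hσ hX hlaw d hd
    have h2 : (∫ ω, ⨆ i : Fin d, X i ω ∂μ) / (σ * Real.sqrt (2 * Real.log d)) ≤
        1 + σ / Real.sqrt (2 * π) * (σ * Real.sqrt (2 * Real.log d))⁻¹ := by
      rw [div_le_iff₀ hSd]
      have hSne : (σ * Real.sqrt (2 * Real.log d)) ≠ 0 := ne_of_gt hSd
      calc ∫ ω, ⨆ i : Fin d, X i ω ∂μ
          ≤ σ * Real.sqrt (2 * Real.log d) + σ / Real.sqrt (2 * π) := h1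
        _ = (1 + σ / Real.sqrt (2 * π) * (σ * Real.sqrt (2 * Real.log d))⁻¹) *
            (σ * Real.sqrt (2 * Real.log d)) := by
            rw [add_mul, one_mul, mul_assoc, inv_mul_cancel₀ hSne, mul_one]
    exact lt_of_le_of_lt h2 hltd
  -- lower bound side
  set c : ℝ := max (1 - ε / 2) (1 / 2) with hc_def
  have hc0 : 0 < c := lt_of_lt_of_le (by norm_num) (le_max_right _ _)
  have hc1 : c < 1 := max_lt (by linarith) (by norm_num)
  have hcε : 1 - ε < c := lt_of_lt_of_le (by linarith) (le_max_left _ _)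
  have hq := gauss_pow_tendsto_zero (σ := σ) (c := c) hσ hc0 hc1
  have htendL : Tendsto (fun d : ℕ =>
      c * (1 - (1 - ((gaussianReal 0 ⟨σ ^ 2, sq_nonneg σ⟩)
          (Ici (c * (σ * Real.sqrt (2 * Real.log d))))).toReal) ^ d)
        - (∫ x, |x| ∂(gaussianReal 0 ⟨σ ^ 2, sq_nonneg σ⟩))
          * (σ * Real.sqrt (2 * Real.log d))⁻¹) atTop (nhds c) := by
    have h1 := ((tendsto_const_nhds : Tendsto (fun _ : ℕ => (1:ℝ)) atTop (nhds 1)).sub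
      hq).const_mul c
    have h2 := hinv.const_mul (∫ x, |x| ∂(gaussianReal 0 ⟨σ ^ 2, sq_nonneg σ⟩))
    have := h1.sub h2
    simpa [mul_comm] using this
  have evL : ∀ᶠ d : ℕ in atTop,
      1 - ε < (∫ ω, ⨆ i : Fin d, X i ω ∂μ) / (σ * Real.sqrt (2 * Real.log d)) := by
    have hlt := htendL.eventually_const_lt hcε
    filter_upwards [Filter.eventually_ge_atTop 1, hS.eventually_gt_atTop 0, hlt]
      with d hd hSd hltd
    have ha : 0 ≤ c * (σ * Real.sqrt (2 * Real.log d)) := by positivity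
    have h1 := lower_bound hσ hX hlaw hindep ha d hd
    have hSne : (σ * Real.sqrt (2 * Real.log d)) ≠ 0 := ne_of_gt hSd
    have h2 : c * (1 - (1 - ((gaussianReal 0 ⟨σ ^ 2, sq_nonneg σ⟩)
          (Ici (c * (σ * Real.sqrt (2 * Real.log d))))).toReal) ^ d)
        - (∫ x, |x| ∂(gaussianReal 0 ⟨σ ^ 2, sq_nonneg σ⟩))
          * (σ * Real.sqrt (2 * Real.log d))⁻¹ ≤
        (∫ ω, ⨆ i : Fin d, X i ω ∂μ) / (σ * Real.sqrt (2 * Real.log d)) := by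
      rw [le_div_iff₀ hSd]
      calc (c * (1 - (1 - ((gaussianReal 0 ⟨σ ^ 2, sq_nonneg σ⟩)
              (Ici (c * (σ * Real.sqrt (2 * Real.log d))))).toReal) ^ d)
            - (∫ x, |x| ∂(gaussianReal 0 ⟨σ ^ 2, sq_nonneg σ⟩))
              * (σ * Real.sqrt (2 * Real.log d))⁻¹) * (σ * Real.sqrt (2 * Real.log d))
          = c * (σ * Real.sqrt (2 * Real.log d)) *
              (1 - (1 - ((gaussianReal 0 ⟨σ ^ 2, sq_nonneg σ⟩)
                (Ici (c * (σ * Real.sqrt (2 * Real.log d))))).toReal) ^ d)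
            - ∫ x, |x| ∂(gaussianReal 0 ⟨σ ^ 2, sq_nonneg σ⟩) := by
            have e1 : (∫ x, |x| ∂(gaussianReal 0 ⟨σ ^ 2, sq_nonneg σ⟩))
                * (σ * Real.sqrt (2 * Real.log d))⁻¹ * (σ * Real.sqrt (2 * Real.log d)) =
                ∫ x, |x| ∂(gaussianReal 0 ⟨σ ^ 2, sq_nonneg σ⟩) := by
              rw [mul_assoc, inv_mul_cancel₀ hSne, mul_one]
            rw [sub_mul, e1]
            ring
        _ ≤ ∫ ω, ⨆ i : Fin d, X i ω ∂μ := h1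
    exact lt_of_lt_of_le hltd h2
  filter_upwards [evU, evL] with d hU hL
  rw [Real.dist_eq, abs_lt]
  constructor <;> linarith
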